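/- arXiv:2405.18833 — 2 statements merged into one kernel-verified Lean document; each statement's English description precedes it below -/
import Mathlib

section
/- Let N, n be positive integers and let A and B be disjoint sets of n points each in the integer grid {0,…,N}² ⊆ ℝ², with no three points of A ∪ B collinear. Let ℓ be a nonnegative integer with 2^ℓ ≥ 8nN⁴, and define d_ℓ(a, b) = ⌊2^ℓ · ‖a − b‖⌋. If M₁ and M₂ are bijections A → B that both minimize Σ_{a∈A} d_ℓ(a, M(a)) over all bijections M : A → B, then no edge of M₁ crosses an edge of M₂: for all a₁, a₂ ∈ A with a₁ ≠ a₂ and M₁(a₁) ≠ M₂(a₂), the open segments from a₁ to M₁(a₁) and from a₂ to M₂(a₂) are disjoint. Hence the union of all d_ℓ-minimum weight perfect matchings forms a planar graph. -/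
open scoped BigOperators

attribute [local instance] Classical.propDecidable

/-- `p` is a point of the integer grid `{0,…,N}² ⊆ ℝ²`. -/
def OnGrid (N : ℕ) (p : EuclideanSpace ℝ (Fin 2)) : Prop :=
  ∀ i : Fin 2, ∃ m : ℕ, m ≤ N ∧ p i = (m : ℝ)

/-- The approximate distance `d_ℓ(a, b) = ⌊2^ℓ · ‖a - b‖⌋`. -/
noncomputable def dl (l : ℕ) (a b : EuclideanSpace ℝ (Fin 2)) : ℤ :=
  ⌊(2 : ℝ) ^ l * ‖a - b‖⌋

/-- The `d_ℓ`-weight of a perfect matching (bijection) `M` between `A` and `B`. -/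
noncomputable def dlWeight (l : ℕ) (A B : Finset (EuclideanSpace ℝ (Fin 2)))
    (M : {x // x ∈ A} → {y // y ∈ B}) : ℤ :=
  ∑ a : {x // x ∈ A},
    dl l (a : EuclideanSpace ℝ (Fin 2)) (M a : EuclideanSpace ℝ (Fin 2))

lemma sum_spec {α β : Type*} [Fintype α] (w : α → β → ℤ) (e₁ e₂ G₁ G₂ : α → β)
    (a₁ a₂ : α) (hne : a₁ ≠ a₂)
    (hA : w a₁ (G₁ a₁) + w a₁ (G₂ a₁) = w a₁ (e₂ a₂) + w a₁ (e₂ a₁))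
    (hB : w a₂ (G₁ a₂) + w a₂ (G₂ a₂) = w a₂ (e₁ a₁) + w a₂ (e₁ a₂))
    (h5 : ∀ a, a ≠ a₁ → a ≠ a₂ →
      w a (G₁ a) + w a (G₂ a) = w a (e₁ a) + w a (e₂ a)) :
    (∑ a, w a (G₁ a)) + (∑ a, w a (G₂ a)) =
      (∑ a, w a (e₁ a)) + (∑ a, w a (e₂ a))
        + (w a₁ (e₂ a₂) + w a₂ (e₁ a₁)) - (w a₁ (e₁ a₁) + w a₂ (e₂ a₂)) := by
  classical
  set F : α → ℤ := fun a => w a (G₁ a) + w a (G₂ a) - (w a (e₁ a) + w a (e₂ a)) with hF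
  have hsub : ({a₁, a₂} : Finset α) ⊆ Finset.univ := Finset.subset_univ _
  have hzero : ∀ x ∈ Finset.univ, x ∉ ({a₁, a₂} : Finset α) → F x = 0 := by
    intro x _ hx
    simp only [Finset.mem_insert, Finset.mem_singleton, not_or] at hx
    have := h5 x hx.1 hx.2
    simp [hF, this]
  have hsum : (∑ a, F a) = F a₁ + F a₂ := by
    rw [← Finset.sum_subset hsub hzero, Finset.sum_pair hne]
  have hexp : (∑ a, F a) = (∑ a, w a (G₁ a)) + (∑ a, w a (G₂ a))
      - ((∑ a, w a (e₁ a)) + (∑ a, w a (e₂ a))) := by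
    simp only [hF, Finset.sum_sub_distrib, Finset.sum_add_distrib]
    try ring
  have hFa₁ : F a₁ = w a₁ (e₂ a₂) - w a₁ (e₁ a₁) := by simp only [hF]; linarith [hA]
  have hFa₂ : F a₂ = w a₂ (e₁ a₁) - w a₂ (e₂ a₂) := by simp only [hF]; linarith [hB]
  rw [hexp] at hsum
  rw [hFa₁, hFa₂] at hsum
  linarith

lemma exists_rewire {α β : Type*} [Fintype α] [Fintype β] (w : α → β → ℤ)
    (e₁ e₂ : α → β) (h₁ : Function.Bijective e₁) (h₂ : Function.Bijective e₂)
    (a₁ a₂ : α) (hne : a₁ ≠ a₂) :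
    ∃ G₁ G₂ : α → β, Function.Bijective G₁ ∧ Function.Bijective G₂ ∧
      (∑ a, w a (G₁ a)) + (∑ a, w a (G₂ a)) =
        (∑ a, w a (e₁ a)) + (∑ a, w a (e₂ a))
          + (w a₁ (e₂ a₂) + w a₂ (e₁ a₁)) - (w a₁ (e₁ a₁) + w a₂ (e₂ a₂)) := by
  classical
  have hcard : Fintype.card α = Fintype.card β := Fintype.card_of_bijective h₁
  have hbij : ∀ G : α → β, Function.Injective G → Function.Bijective G := fun G hG =>
    (Fintype.bijective_iff_injective_and_card G).2 ⟨hG, hcard⟩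
  set E₁ : α ≃ β := Equiv.ofBijective e₁ h₁ with hE₁
  set E₂ : α ≃ β := Equiv.ofBijective e₂ h₂ with hE₂
  set φ : Equiv.Perm α := E₂.trans E₁.symm with hφ
  have key : ∀ a, e₁ (φ a) = e₂ a := by
    intro a
    show e₁ (E₁.symm (E₂ a)) = e₂ a
    have : E₁ (E₁.symm (E₂ a)) = E₂ a := E₁.apply_symm_apply _
    exact this
  have keysymm : ∀ a, e₂ (φ.symm a) = e₁ a := by
    intro a
    have := key (φ.symm a)
    rw [φ.apply_symm_apply] at this
    exact this.symm
  have hpow : ∀ (k : ℕ) (x : α), (φ ^ (k+1)) x = φ ((φ ^ k) x) := by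
    intro k x; rw [pow_succ']; rfl
  by_cases hcyc : ∃ k : ℕ, (φ ^ k) a₂ = a₁
  · -- same cycle
    set k₀ := Nat.find hcyc with hk₀def
    have hk₀ : (φ ^ k₀) a₂ = a₁ := Nat.find_spec hcyc
    have hk₀pos : 0 < k₀ := by
      rcases Nat.eq_zero_or_pos k₀ with h | h
      · exfalso; apply hne; rw [h] at hk₀; simpa using hk₀.symm
      · exact h
    set s : ℕ → α := fun j => (φ ^ j) a₂ with hs
    have hs_succ : ∀ j, s (j+1) = φ (s j) := fun j => hpow j a₂
    have hfix : ∀ m, (φ ^ m) a₂ = a₂ → m ≤ k₀ → m = 0 := by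
      intro m hm hmk
      by_contra h0
      have hmpos : 0 < m := Nat.pos_of_ne_zero h0
      have : (φ ^ (k₀ - m)) a₂ = a₁ := by
        have : (φ ^ (k₀ - m)) ((φ ^ m) a₂) = (φ ^ k₀) a₂ := by
          rw [← Equiv.Perm.mul_apply, ← pow_add, Nat.sub_add_cancel hmk]
        rw [hm] at this; rw [this]; exact hk₀
      exact absurd this (Nat.find_min hcyc (by omega))
    have hinj : ∀ i, i ≤ k₀ → ∀ j, j ≤ k₀ → s i = s j → i = j := by
      have main : ∀ i j, i ≤ j → j ≤ k₀ → s i = s j → i = j := by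
        intro i j hij hjk hs'
        have : (φ ^ (j - i)) a₂ = a₂ := by
          have h1 : (φ ^ (j - i)) ((φ ^ i) a₂) = (φ ^ j) a₂ := by
            rw [← Equiv.Perm.mul_apply, ← pow_add, Nat.sub_add_cancel hij]
          have hs'' : (φ ^ i) a₂ = (φ ^ j) a₂ := hs'
          have h2 : (φ ^ i) ((φ ^ (j - i)) a₂) = (φ ^ i) a₂ := by
            rw [← Equiv.Perm.mul_apply, ← pow_mul_comm, Equiv.Perm.mul_apply, h1, ← hs'']
          exact (φ ^ i).injective h2
        have := hfix _ this (le_trans (Nat.sub_le _ _) hjk)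
        omega
      intro i hi j hj hs'
      rcases le_total i j with h | h
      · exact main i j h hj hs'
      · exact (main j i h hi hs'.symm).symm
    -- construct cycle shifts
    set c : α → α := fun x => if x = s k₀ then s 1
      else if ∃ j, 1 ≤ j ∧ j < k₀ ∧ s j = x then φ x else x with hc
    set c' : α → α := fun x => if x = s 0 then s (k₀ - 1)
      else if ∃ j, 1 ≤ j ∧ j < k₀ ∧ s j = x then φ.symm x else x with hc'
    have hsymm_s : ∀ j, 1 ≤ j → φ.symm (s j) = s (j - 1) := by
      intro j hj
      have : s ((j - 1) + 1) = φ (s (j-1)) := hs_succ (j-1)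
      rw [Nat.sub_add_cancel hj] at this
      rw [this, Equiv.symm_apply_apply]
    -- values of c
    have hc_top : c (s k₀) = s 1 := by rw [hc]; simp
    have hc_mid : ∀ j, 1 ≤ j → j < k₀ → c (s j) = s (j + 1) := by
      intro j h1j hjk
      rw [hc]
      simp only
      rw [if_neg, if_pos ⟨j, h1j, hjk, rfl⟩, ← hs_succ]
      intro h
      exact absurd (hinj j (le_of_lt hjk) k₀ le_rfl h) (by omega)
    have hc_out : ∀ x, x ≠ s k₀ → (¬∃ j, 1 ≤ j ∧ j < k₀ ∧ s j = x) → c x = x := by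
      intro x hx1 hx2
      rw [hc]; simp only; rw [if_neg hx1, if_neg hx2]
    -- values of c'
    have hc'_zero : c' (s 0) = s (k₀ - 1) := by rw [hc']; simp
    have hc'_mid : ∀ j, 1 ≤ j → j < k₀ → c' (s j) = s (j - 1) := by
      intro j h1j hjk
      rw [hc']
      simp only
      rw [if_neg, if_pos ⟨j, h1j, hjk, rfl⟩, hsymm_s j h1j]
      intro h
      exact absurd (hinj j (le_of_lt hjk) 0 (Nat.zero_le _) h) (by omega)
    have hc'_out : ∀ x, x ≠ s 0 → (¬∃ j, 1 ≤ j ∧ j < k₀ ∧ s j = x) → c' x = x := by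
      intro x hx1 hx2
      rw [hc']; simp only; rw [if_neg hx1, if_neg hx2]
    -- c is injective via explicit left inverse
    have hc_inj : Function.Injective c := by
      have : Function.LeftInverse (fun x => if x = s 1 then s k₀
          else if ∃ j, 2 ≤ j ∧ j ≤ k₀ ∧ s j = x then φ.symm x else x) c := by
        intro x
        by_cases hx1 : x = s k₀
        · rw [hx1, hc_top]
          simp only
          rw [if_true]
        · by_cases hx2 : ∃ j, 1 ≤ j ∧ j < k₀ ∧ s j = x
          · obtain ⟨j, h1j, hjk, heq⟩ := hx2
            rw [← heq, hc_mid j h1j hjk]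
            simp only
            have hcond1 : ¬ (s (j+1) = s 1) := by
              intro h
              have := hinj (j+1) (by omega) 1 (by omega) h
              omega
            rw [if_neg hcond1, if_pos ⟨j+1, by omega, by omega, rfl⟩,
              hsymm_s (j+1) (by omega)]
            simp
          · rw [hc_out x hx1 hx2]
            simp only
            have hcond1 : ¬ (x = s 1) := by
              intro h
              rcases Nat.lt_or_ge 1 k₀ with hk | hk
              · exact hx2 ⟨1, le_rfl, hk, h.symm⟩
              · apply hx1; rw [h]; have hq : (1:ℕ) = k₀ := by omega
                rw [hq]
            have hcond2 : ¬ ∃ j, 2 ≤ j ∧ j ≤ k₀ ∧ s j = x := by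
              rintro ⟨j, h2j, hjk, heq⟩
              rcases Nat.lt_or_ge j k₀ with h | h
              · exact hx2 ⟨j, by omega, h, heq⟩
              · apply hx1; rw [← heq]; have hq : j = k₀ := by omega
                rw [hq]
            rw [if_neg hcond1, if_neg hcond2]
      exact this.injective
    have hc'_inj : Function.Injective c' := by
      have : Function.LeftInverse (fun x => if x = s (k₀ - 1) then s 0
          else if ∃ j, j + 2 ≤ k₀ ∧ s j = x then φ x else x) c' := by
        intro x
        by_cases hx1 : x = s 0
        · rw [hx1, hc'_zero]
          simp only
          rw [if_true]
        · by_cases hx2 : ∃ j, 1 ≤ j ∧ j < k₀ ∧ s j = x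
          · obtain ⟨j, h1j, hjk, heq⟩ := hx2
            rw [← heq, hc'_mid j h1j hjk]
            simp only
            have hcond1 : ¬ (s (j-1) = s (k₀ - 1)) := by
              intro h
              have := hinj (j-1) (by omega) (k₀ - 1) (by omega) h
              omega
            rw [if_neg hcond1, if_pos ⟨j - 1, by omega, rfl⟩, ← hs_succ]
            have hq : j - 1 + 1 = j := by omega
            rw [hq]
          · rw [hc'_out x hx1 hx2]
            simp only
            have hcond1 : ¬ (x = s (k₀ - 1)) := by
              intro h
              rcases Nat.eq_zero_or_pos (k₀ - 1) with hk | hk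
              · apply hx1; rw [h]; have hq : k₀ - 1 = 0 := by omega
                rw [hq]
              · exact hx2 ⟨k₀ - 1, hk, by omega, h.symm⟩
            have hcond2 : ¬ ∃ j, j + 2 ≤ k₀ ∧ s j = x := by
              rintro ⟨j, hjk, heq⟩
              rcases Nat.eq_zero_or_pos j with h | h
              · apply hx1; rw [← heq]; have hq : j = 0 := by omega
                rw [hq]
              · exact hx2 ⟨j, h, by omega, heq⟩
            rw [if_neg hcond1, if_neg hcond2]
      exact this.injective
    refine ⟨e₁ ∘ c, e₂ ∘ c', hbij _ (h₁.injective.comp hc_inj),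
      hbij _ (h₂.injective.comp hc'_inj), ?_⟩
    have ha₁s : a₁ = s k₀ := hk₀.symm
    have ha₂s : a₂ = s 0 := by rw [hs]; simp
    have hne_top_zero : s k₀ ≠ s 0 := by
      intro h; exact absurd (hinj k₀ le_rfl 0 (Nat.zero_le _) h) (by omega)
    have hv1 : e₁ (c a₁) = e₂ a₂ := by
      rw [ha₁s, ha₂s, hc_top, hs_succ 0, key]
    have hv2 : e₂ (c' a₂) = e₁ a₁ := by
      rw [ha₂s, ha₁s, hc'_zero, ← keysymm (s k₀), hsymm_s k₀ hk₀pos]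
    have hv3 : e₂ (c' a₁) = e₂ a₁ := by
      rw [ha₁s, hc'_out (s k₀) hne_top_zero]
      rintro ⟨j, h1j, hjk, h⟩
      exact absurd (hinj j (le_of_lt hjk) k₀ le_rfl h) (by omega)
    have hv4 : e₁ (c a₂) = e₁ a₂ := by
      rw [ha₂s, hc_out (s 0) (Ne.symm hne_top_zero)]
      rintro ⟨j, h1j, hjk, h⟩
      exact absurd (hinj j (le_of_lt hjk) 0 (Nat.zero_le _) h) (by omega)
    apply sum_spec w e₁ e₂ _ _ a₁ a₂ hne
    · show w a₁ (e₁ (c a₁)) + w a₁ (e₂ (c' a₁)) = _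
      rw [hv1, hv3]
    · show w a₂ (e₁ (c a₂)) + w a₂ (e₂ (c' a₂)) = _
      rw [hv2, hv4]
      ring
    · intro a haa₁ haa₂
      by_cases hmem : ∃ j, 1 ≤ j ∧ j < k₀ ∧ s j = a
      · obtain ⟨j, h1j, hjk, rfl⟩ := hmem
        show w _ (e₁ (c (s j))) + w _ (e₂ (c' (s j))) = _
        rw [hc_mid j h1j hjk, hc'_mid j h1j hjk, hs_succ, key, ← keysymm (s j),
          hsymm_s j h1j]
        ring
      · show w _ (e₁ (c a)) + w _ (e₂ (c' a)) = _
        rw [hc_out a (by rw [← ha₁s]; exact haa₁) hmem,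
          hc'_out a (by rw [← ha₂s]; exact haa₂) hmem]
  · -- different cycles: hybrid construction
    set C : Set α := {x | ∃ k : ℕ, (φ ^ k) a₂ = x} with hC
    have ha₂C : a₂ ∈ C := ⟨0, rfl⟩
    have ha₁C : a₁ ∉ C := by
      intro ⟨k, hk⟩; exact hcyc ⟨k, hk⟩
    have hφC : ∀ x, x ∈ C → φ x ∈ C := by
      rintro x ⟨k, rfl⟩; exact ⟨k+1, hpow k a₂⟩
    have hφsymmC : ∀ x, x ∈ C → φ.symm x ∈ C := by
      rintro x ⟨k, rfl⟩
      have ho : 0 < orderOf φ := orderOf_pos φ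
      refine ⟨k + (orderOf φ - 1), ?_⟩
      rw [Equiv.eq_symm_apply, ← hpow]
      have he : k + (orderOf φ - 1) + 1 = orderOf φ + k := by omega
      rw [he, pow_add, Equiv.Perm.mul_apply, pow_orderOf_eq_one]
      simp
    set G₁ : α → β := fun a => if a = a₁ then e₂ a₂ else if a = a₂ then e₁ a₁
      else if a ∈ C then e₂ a else e₁ a with hG₁
    set G₂ : α → β := fun a => if a ∈ C then e₁ a else e₂ a with hG₂
    have hG₁a₁ : G₁ a₁ = e₂ a₂ := by rw [hG₁]; simp
    have hG₁a₂ : G₁ a₂ = e₁ a₁ := by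
      rw [hG₁]; simp only; rw [if_neg (Ne.symm hne)]; simp
    have hG₁C : ∀ a, a ≠ a₁ → a ≠ a₂ → a ∈ C → G₁ a = e₂ a := by
      intro a h1 h2 h3
      rw [hG₁]; simp only; rw [if_neg h1, if_neg h2, if_pos h3]
    have hG₁out : ∀ a, a ≠ a₁ → a ≠ a₂ → a ∉ C → G₁ a = e₁ a := by
      intro a h1 h2 h3
      rw [hG₁]; simp only; rw [if_neg h1, if_neg h2, if_neg h3]
    have hG₂C : ∀ a, a ∈ C → G₂ a = e₁ a := by
      intro a h; rw [hG₂]; simp only; rw [if_pos h]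
    have hG₂out : ∀ a, a ∉ C → G₂ a = e₂ a := by
      intro a h; rw [hG₂]; simp only; rw [if_neg h]
    -- injectivity helpers
    have he₂e₁ : ∀ x y, e₂ x = e₁ y → y = φ x := by
      intro x y h
      rw [← key x] at h
      exact (h₁.injective h).symm
    have hG₂inj : Function.Injective G₂ := by
      intro x y h
      by_cases hx : x ∈ C <;> by_cases hy : y ∈ C
      · rw [hG₂C x hx, hG₂C y hy] at h; exact h₁.injective h
      · rw [hG₂C x hx, hG₂out y hy] at h
        exfalso
        have hxφ := he₂e₁ y x h.symm
        have hx' := hφsymmC x hx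
        rw [hxφ, Equiv.symm_apply_apply] at hx'
        exact hy hx'
      · rw [hG₂out x hx, hG₂C y hy] at h
        exfalso
        have hyφ := he₂e₁ x y h
        have hy' := hφsymmC y hy
        rw [hyφ, Equiv.symm_apply_apply] at hy'
        exact hx hy'
      · rw [hG₂out x hx, hG₂out y hy] at h; exact h₂.injective h
    have hG₁inj : Function.Injective G₁ := by
      intro x y h
      by_cases hx1 : x = a₁
      · by_cases hy1 : y = a₁
        · rw [hx1, hy1]
        rw [hx1, hG₁a₁] at h
        exfalso
        by_cases hy2 : y = a₂
        · rw [hy2, hG₁a₂] at h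
          have := he₂e₁ a₂ a₁ h
          exact ha₁C (this ▸ hφC a₂ ha₂C)
        by_cases hyC : y ∈ C
        · rw [hG₁C y hy1 hy2 hyC] at h
          exact hy2 (h₂.injective h).symm
        · rw [hG₁out y hy1 hy2 hyC] at h
          have := he₂e₁ a₂ y h
          exact hyC (this ▸ hφC a₂ ha₂C)
      by_cases hy1 : y = a₁
      · rw [hy1, hG₁a₁] at h
        exfalso
        by_cases hx2 : x = a₂
        · rw [hx2, hG₁a₂] at h
          have := he₂e₁ a₂ a₁ h.symm
          exact ha₁C (this ▸ hφC a₂ ha₂C)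
        by_cases hxC : x ∈ C
        · rw [hG₁C x hx1 hx2 hxC] at h
          exact hx2 (h₂.injective h.symm).symm
        · rw [hG₁out x hx1 hx2 hxC] at h
          have := he₂e₁ a₂ x h.symm
          exact hxC (this ▸ hφC a₂ ha₂C)
      by_cases hx2 : x = a₂
      · by_cases hy2 : y = a₂
        · rw [hx2, hy2]
        rw [hx2, hG₁a₂] at h
        exfalso
        by_cases hyC : y ∈ C
        · rw [hG₁C y hy1 hy2 hyC] at h
          have := he₂e₁ y a₁ h.symm
          exact ha₁C (this ▸ hφC y hyC)
        · rw [hG₁out y hy1 hy2 hyC] at h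
          exact hy1 (h₁.injective h).symm
      by_cases hy2 : y = a₂
      · rw [hy2, hG₁a₂] at h
        exfalso
        by_cases hxC : x ∈ C
        · rw [hG₁C x hx1 hx2 hxC] at h
          have := he₂e₁ x a₁ h
          exact ha₁C (this ▸ hφC x hxC)
        · rw [hG₁out x hx1 hx2 hxC] at h
          exact hx1 (h₁.injective h)
      by_cases hxC : x ∈ C <;> by_cases hyC : y ∈ C
      · rw [hG₁C x hx1 hx2 hxC, hG₁C y hy1 hy2 hyC] at h
        exact h₂.injective h
      · rw [hG₁C x hx1 hx2 hxC, hG₁out y hy1 hy2 hyC] at h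
        exfalso
        have := he₂e₁ x y h
        exact hyC (this ▸ hφC x hxC)
      · rw [hG₁out x hx1 hx2 hxC, hG₁C y hy1 hy2 hyC] at h
        exfalso
        have := he₂e₁ y x h.symm
        exact hxC (this ▸ hφC y hyC)
      · rw [hG₁out x hx1 hx2 hxC, hG₁out y hy1 hy2 hyC] at h
        exact h₁.injective h
    refine ⟨G₁, G₂, hbij _ hG₁inj, hbij _ hG₂inj, ?_⟩
    apply sum_spec w e₁ e₂ _ _ a₁ a₂ hne
    · rw [hG₁a₁, hG₂out a₁ ha₁C]
    · rw [hG₁a₂, hG₂C a₂ ha₂C]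
    · intro a h1 h2
      by_cases hC' : a ∈ C
      · rw [hG₁C a h1 h2 hC', hG₂C a hC']
        ring
      · rw [hG₁out a h1 h2 hC', hG₂out a hC']



private lemma sqle (a b : ℝ) (h0 : 0 ≤ a) (hb : 0 ≤ b) (h2 : a^2 ≤ b^2) : a ≤ b := by
  nlinarith

private lemma step_dot (rr dot Δsq : ℝ) (hpos : 0 < rr) (hL : rr^2 = dot^2 + Δsq)
    (hΔ : 4 ≤ Δsq) : dot < rr ∧ -rr < dot ∧ Δsq ≤ (rr - dot) * (2*rr) := by
  have h1 : dot < rr := by nlinarith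
  have h2 : -rr < dot := by nlinarith
  exact ⟨h1, h2, by nlinarith⟩

private lemma step_tri (T γ x : ℝ) (hγ : 0 ≤ γ) (hT : 0 < T)
    (hsq : T^2 - γ^2 = x) (hx : 0 ≤ x) : γ ≤ T ∧ x ≤ (T - γ) * (2*T) := by
  have h1 : γ ≤ T := by nlinarith
  exact ⟨h1, by nlinarith⟩

private lemma step_assemble (g T rr P Q Dr N : ℝ)
    (hg : 0 ≤ g) (hP : 1 ≤ P) (hQ : 1 ≤ Q) (hDr : 2 ≤ Dr) (hN : 1 ≤ N)
    (hrrpos : 0 < rr) (hrr : rr ≤ 9/4 * N^2) (hTpos : 0 < T)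
    (hTD : T * Dr ≤ (P + Q) * (3/2*N))
    (hchain : P * Q ≤ g * (2*T) * rr) :
    1/(8*N^3) ≤ g := by
  have hNpos : 0 < N := by linarith
  have hPQ2 : P + Q ≤ 2 * (P * Q) := by nlinarith
  have hT2 : T * 2 ≤ T * Dr := by nlinarith
  have hTle : T ≤ 3/2 * (P*Q) * N := by nlinarith
  have hPQpos : 0 < P * Q := by nlinarith
  have h2T : g * (2*T) * rr ≤ g * ((27/4) * (P*Q) * N^3) := by
    have hb : (2*T) * rr ≤ (27/4) * (P*Q) * N^3 := by
      have := mul_le_mul hTle hrr (le_of_lt hrrpos) (by positivity)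
      nlinarith [this]
    calc g * (2*T) * rr = g * ((2*T) * rr) := by ring
      _ ≤ g * ((27/4) * (P*Q) * N^3) := mul_le_mul_of_nonneg_left hb hg
  have hkey : P * Q ≤ g * ((27/4) * (P*Q) * N^3) := le_trans hchain h2T
  have hN3 : (0:ℝ) < N^3 := by positivity
  rw [div_le_iff₀ (by positivity : (0:ℝ) < 8*N^3)]
  have h1 : 1 ≤ g * (27/4) * N^3 := by
    have h2 : 1 * (P*Q) ≤ (g * (27/4) * N^3) * (P*Q) := by
      rw [one_mul]
      calc P*Q ≤ g * ((27/4) * (P*Q) * N^3) := hkey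
        _ = (g * (27/4) * N^3) * (P*Q) := by ring
    exact le_of_mul_le_mul_right h2 hPQpos
  nlinarith [h1, mul_nonneg hg (le_of_lt hN3)]

set_option maxHeartbeats 1000000 in
lemma gap_core (N : ℝ) (hN : 1 ≤ N)
    (u0 u1 v0 v1 t s r₁ r₂ γ₁ γ₂ : ℝ)
    (hu0 : |u0| ≤ N) (hu1 : |u1| ≤ N) (hv0 : |v0| ≤ N) (hv1 : |v1| ≤ N)
    (ht0 : 0 < t) (ht1 : t < 1) (hs0 : 0 < s) (hs1 : s < 1)
    (hr₁0 : 0 ≤ r₁) (hr₂0 : 0 ≤ r₂) (hγ₁0 : 0 ≤ γ₁) (hγ₂0 : 0 ≤ γ₂)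
    (hr₁sq : r₁^2 = u0^2 + u1^2) (hr₂sq : r₂^2 = v0^2 + v1^2)
    (hγ₁sq : γ₁^2 = (t*u0 + (1-s)*v0)^2 + (t*u1 + (1-s)*v1)^2)
    (hγ₂sq : γ₂^2 = (s*v0 + (1-t)*u0)^2 + (s*v1 + (1-t)*u1)^2)
    (D P₁ P₂ : ℤ)
    (hD : (D:ℝ) = |u0*v1 - u1*v0|) (hDne : u0*v1 - u1*v0 ≠ 0)
    (hP₁ : (P₁:ℝ) = t * |u0*v1 - u1*v0|) (hP₂ : (P₂:ℝ) = s * |u0*v1 - u1*v0|) :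
    γ₁ + γ₂ + 1/(8*N^3) ≤ r₁ + r₂ := by
  have hNpos : (0:ℝ) < N := by linarith
  have hDrpos : 0 < |u0*v1 - u1*v0| := abs_pos.2 hDne
  have hDint1 : (1:ℝ) ≤ (D:ℝ) := by
    have : (0:ℤ) < D := by exact_mod_cast hD ▸ hDrpos
    exact_mod_cast this
  have hP₁pos : (0:ℝ) < (P₁:ℝ) := by rw [hP₁]; positivity
  have hP₁1 : (1:ℝ) ≤ (P₁:ℝ) := by
    have : (0:ℤ) < P₁ := by exact_mod_cast hP₁pos
    exact_mod_cast this
  have hQ₂cast : ((D - P₂ : ℤ):ℝ) = (1-s) * |u0*v1 - u1*v0| := by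
    push_cast
    rw [hD, hP₂]; ring
  have hQ₂pos : (0:ℝ) < ((D - P₂ : ℤ):ℝ) := by
    rw [hQ₂cast]; have h1s : 0 < 1 - s := by linarith
    positivity
  have hQ₂1 : (1:ℝ) ≤ ((D - P₂ : ℤ):ℝ) := by
    have : (0:ℤ) < D - P₂ := by exact_mod_cast hQ₂pos
    exact_mod_cast this
  have hP₂pos : (0:ℝ) < (P₂:ℝ) := by rw [hP₂]; positivity
  have hP₂1 : (1:ℝ) ≤ (P₂:ℝ) := by
    have : (0:ℤ) < P₂ := by exact_mod_cast hP₂pos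
    exact_mod_cast this
  have hDr2 : (2:ℝ) ≤ |u0*v1 - u1*v0| := by
    have h' : ((D - P₂ : ℤ):ℝ) = (D:ℝ) - (P₂:ℝ) := by push_cast; ring
    rw [← hD]
    rw [h'] at hQ₂1
    linarith [hP₂1, hQ₂1]
  have hu0N : u0^2 ≤ N^2 := sq_le_sq' (abs_le.1 hu0).1 (abs_le.1 hu0).2
  have hu1N : u1^2 ≤ N^2 := sq_le_sq' (abs_le.1 hu1).1 (abs_le.1 hu1).2
  have hv0N : v0^2 ≤ N^2 := sq_le_sq' (abs_le.1 hv0).1 (abs_le.1 hv0).2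
  have hv1N : v1^2 ≤ N^2 := sq_le_sq' (abs_le.1 hv1).1 (abs_le.1 hv1).2
  have hNsqnn : (0:ℝ) ≤ N^2 := sq_nonneg N
  have he32 : (3/2 * N)^2 = 9/4 * N^2 := by ring
  have hr₁le : r₁ ≤ 3/2 * N := by
    apply sqle _ _ hr₁0 (by positivity)
    rw [hr₁sq, he32]; linarith [hu0N, hu1N]
  have hr₂le : r₂ ≤ 3/2 * N := by
    apply sqle _ _ hr₂0 (by positivity)
    rw [hr₂sq, he32]; linarith [hv0N, hv1N]
  have hLag : (r₁*r₂)^2 = (u0*v0 + u1*v1)^2 + (u0*v1 - u1*v0)^2 := by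
    rw [mul_pow, hr₁sq, hr₂sq]; ring
  have hΔsq4 : (4:ℝ) ≤ (u0*v1 - u1*v0)^2 := by
    have h := mul_le_mul hDr2 hDr2 (by norm_num) (abs_nonneg (u0*v1 - u1*v0))
    rw [abs_mul_abs_self] at h
    rw [pow_two]
    linarith [h]
  have hrrpos : 0 < r₁ * r₂ := by
    have h1 : 0 ≤ r₁ * r₂ := mul_nonneg hr₁0 hr₂0
    rcases lt_or_eq_of_le h1 with h | h
    · exact h
    · exfalso
      have h2 : (r₁*r₂)^2 = 0 := by rw [← h]; ring
      linarith [hLag, hΔsq4, sq_nonneg (u0*v0+u1*v1), h2]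
  obtain ⟨hdotlt, hdotgt, hgap0⟩ :=
    step_dot (r₁*r₂) (u0*v0+u1*v1) ((u0*v1-u1*v0)^2) hrrpos hLag hΔsq4
  have hr₁pos : 0 < r₁ := by
    rcases lt_or_eq_of_le hr₁0 with h | h
    · exact h
    · exfalso; rw [← h] at hrrpos; simp at hrrpos
  have hr₂pos : 0 < r₂ := by
    rcases lt_or_eq_of_le hr₂0 with h | h
    · exact h
    · exfalso; rw [← h] at hrrpos; simp at hrrpos
  -- triangle quantities
  have hsq₁ : (t*r₁ + (1-s)*r₂)^2 - γ₁^2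
      = 2*t*(1-s)*(r₁*r₂ - (u0*v0+u1*v1)) := by
    linear_combination t^2 * hr₁sq + (1-s)^2 * hr₂sq - hγ₁sq
  have hsq₂ : (s*r₂ + (1-t)*r₁)^2 - γ₂^2
      = 2*s*(1-t)*(r₁*r₂ - (u0*v0+u1*v1)) := by
    linear_combination (1-t)^2 * hr₁sq + s^2 * hr₂sq - hγ₂sq
  have hT₁pos : 0 < t*r₁ + (1-s)*r₂ := by
    have h1 := mul_pos ht0 hr₁pos
    have h2 : 0 < (1-s)*r₂ := mul_pos (by linarith) hr₂pos
    linarith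
  have hT₂pos : 0 < s*r₂ + (1-t)*r₁ := by
    have h1 := mul_pos hs0 hr₂pos
    have h2 : 0 < (1-t)*r₁ := mul_pos (by linarith) hr₁pos
    linarith
  have hts : 0 < t*(1-s) := mul_pos ht0 (by linarith)
  have hst : 0 < s*(1-t) := mul_pos hs0 (by linarith)
  have hdnn : (0:ℝ) ≤ r₁*r₂ - (u0*v0+u1*v1) := by linarith [hdotlt]
  obtain ⟨hγ₂le, -⟩ := step_tri _ γ₂ _ hγ₂0 hT₂pos hsq₂
    (mul_nonneg (mul_nonneg (by linarith : (0:ℝ) ≤ 2*s) (by linarith : (0:ℝ) ≤ 1-t)) hdnn)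
  obtain ⟨hγ₁le, hchain1⟩ := step_tri _ γ₁ _ hγ₁0 hT₁pos hsq₁
    (mul_nonneg (mul_nonneg (by linarith : (0:ℝ) ≤ 2*t) (by linarith : (0:ℝ) ≤ 1-s)) hdnn)
  -- numeric assembly for the first triangle
  have hPQ : (P₁:ℝ) * ((D - P₂:ℤ):ℝ) = t*(1-s)*(u0*v1-u1*v0)^2 := by
    rw [hP₁, hQ₂cast]
    have h := sq_abs (u0*v1 - u1*v0)
    linear_combination t*(1-s)*h
  have hchain : (P₁:ℝ) * ((D - P₂:ℤ):ℝ)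
      ≤ ((t*r₁ + (1-s)*r₂) - γ₁) * (2*(t*r₁ + (1-s)*r₂)) * (r₁*r₂) := by
    rw [hPQ]
    have h1 : t*(1-s)*(u0*v1-u1*v0)^2
        ≤ t*(1-s) * ((r₁*r₂ - (u0*v0+u1*v1)) * (2*(r₁*r₂))) :=
      mul_le_mul_of_nonneg_left hgap0 (le_of_lt hts)
    have h2 : 2*t*(1-s)*(r₁*r₂ - (u0*v0+u1*v1))
        ≤ ((t*r₁ + (1-s)*r₂) - γ₁) * (2*(t*r₁ + (1-s)*r₂)) := hchain1
    have h3 : 0 ≤ r₁ * r₂ := le_of_lt hrrpos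
    calc t*(1-s)*(u0*v1-u1*v0)^2
        ≤ t*(1-s) * ((r₁*r₂ - (u0*v0+u1*v1)) * (2*(r₁*r₂))) := h1
      _ = (2*t*(1-s)*(r₁*r₂ - (u0*v0+u1*v1))) * (r₁*r₂) := by ring
      _ ≤ ((t*r₁ + (1-s)*r₂) - γ₁) * (2*(t*r₁ + (1-s)*r₂)) * (r₁*r₂) :=
          mul_le_mul_of_nonneg_right h2 h3
  have hTD : (t*r₁ + (1-s)*r₂) * |u0*v1 - u1*v0|
      ≤ ((P₁:ℝ) + ((D - P₂:ℤ):ℝ)) * (3/2*N) := by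
    have he : (t*r₁ + (1-s)*r₂) * |u0*v1 - u1*v0|
        = (P₁:ℝ) * r₁ + ((D - P₂:ℤ):ℝ) * r₂ := by
      rw [hP₁, hQ₂cast]; ring
    rw [he]
    have h1 : (P₁:ℝ) * r₁ ≤ (P₁:ℝ) * (3/2*N) :=
      mul_le_mul_of_nonneg_left hr₁le (by linarith)
    have h2 : ((D - P₂:ℤ):ℝ) * r₂ ≤ ((D - P₂:ℤ):ℝ) * (3/2*N) :=
      mul_le_mul_of_nonneg_left hr₂le (by linarith)
    linarith
  have hrr94 : r₁ * r₂ ≤ 9/4 * N^2 := by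
    have h := mul_le_mul hr₁le hr₂le (le_of_lt hr₂pos) (by positivity)
    have e : 3/2*N*(3/2*N) = 9/4*N^2 := by ring
    linarith [h, e.le, e.ge]
  have hfinal : 1/(8*N^3) ≤ (t*r₁ + (1-s)*r₂) - γ₁ :=
    step_assemble _ _ (r₁*r₂) (P₁:ℝ) ((D - P₂:ℤ):ℝ) (|u0*v1 - u1*v0|) N
      (by linarith [hγ₁le]) hP₁1 hQ₂1 hDr2 hN hrrpos hrr94 hT₁pos hTD hchain
  have hTT : (t*r₁ + (1-s)*r₂) + (s*r₂ + (1-t)*r₁) = r₁ + r₂ := by ring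
  linarith [hγ₂le, hfinal]

private lemma norm_sq_two (x : EuclideanSpace ℝ (Fin 2)) :
    ‖x‖^2 = (x 0)^2 + (x 1)^2 := by
  rw [EuclideanSpace.norm_eq, Fin.sum_univ_two, Real.sq_sqrt (by positivity)]
  simp [sq_abs]

private lemma coord_abs_le (N : ℕ) (x y : EuclideanSpace ℝ (Fin 2))
    (hx : OnGrid N x) (hy : OnGrid N y) (i : Fin 2) : |x i - y i| ≤ (N:ℝ) := by
  obtain ⟨m, hm, hxm⟩ := hx i
  obtain ⟨k, hk, hyk⟩ := hy i
  rw [hxm, hyk, abs_le]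
  have h1 : (m:ℝ) ≤ N := by exact_mod_cast hm
  have h2 : (k:ℝ) ≤ N := by exact_mod_cast hk
  have h3 : (0:ℝ) ≤ m := Nat.cast_nonneg m
  have h4 : (0:ℝ) ≤ k := Nat.cast_nonneg k
  constructor <;> linarith

private lemma grid_int (N : ℕ) (x y : EuclideanSpace ℝ (Fin 2))
    (hx : OnGrid N x) (hy : OnGrid N y) (i : Fin 2) : ∃ z : ℤ, (z:ℝ) = x i - y i := by
  obtain ⟨m, _, hxm⟩ := hx i
  obtain ⟨k, _, hyk⟩ := hy i
  exact ⟨(m:ℤ) - k, by rw [hxm, hyk]; push_cast; ring⟩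

lemma gap_euclid (N : ℕ) (hN : 0 < N) (a₁ b₁ a₂ b₂ : EuclideanSpace ℝ (Fin 2))
    (hga₁ : OnGrid N a₁) (hgb₁ : OnGrid N b₁) (hga₂ : OnGrid N a₂) (hgb₂ : OnGrid N b₂)
    (hncol : ¬ Collinear ℝ ({a₁, b₁, a₂} : Set (EuclideanSpace ℝ (Fin 2))))
    (X : EuclideanSpace ℝ (Fin 2))
    (hX1 : X ∈ openSegment ℝ a₁ b₁) (hX2 : X ∈ openSegment ℝ a₂ b₂) :
    ‖a₁ - b₂‖ + ‖a₂ - b₁‖ + 1/(8*(N:ℝ)^3) ≤ ‖a₁ - b₁‖ + ‖a₂ - b₂‖ := by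
  obtain ⟨p, t, hp0, ht0, hpt, hXt⟩ := hX1
  obtain ⟨q, s, hq0, hs0, hqs, hXs⟩ := hX2
  have ht1 : t < 1 := by linarith
  have hs1 : s < 1 := by linarith
  -- coordinatewise crossing equations
  have hcomp : ∀ i : Fin 2,
      a₁ i + t*(b₁ i - a₁ i) = a₂ i + s*(b₂ i - a₂ i) := by
    intro i
    have hXX : p • a₁ + t • b₁ = q • a₂ + s • b₂ := by rw [hXt, hXs]
    have := congrArg (fun z : EuclideanSpace ℝ (Fin 2) => z i) hXX
    simp only [PiLp.add_apply, PiLp.smul_apply, smul_eq_mul] at this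
    have hp : p = 1 - t := by linarith
    have hq : q = 1 - s := by linarith
    rw [hp, hq] at this
    ring_nf
    ring_nf at this
    linarith [this]
  -- coordinates
  set u0 : ℝ := b₁ 0 - a₁ 0 with hu0d
  set u1 : ℝ := b₁ 1 - a₁ 1 with hu1d
  set v0 : ℝ := b₂ 0 - a₂ 0 with hv0d
  set v1 : ℝ := b₂ 1 - a₂ 1 with hv1d
  set e0 : ℝ := a₂ 0 - a₁ 0 with he0d
  set e1 : ℝ := a₂ 1 - a₁ 1 with he1d
  have h0 : t*u0 - s*v0 = e0 := by
    have := hcomp 0; rw [hu0d, hv0d, he0d]; linarith [this]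
  have h1 : t*u1 - s*v1 = e1 := by
    have := hcomp 1; rw [hu1d, hv1d, he1d]; linarith [this]
  -- nonzero determinant from non-collinearity
  have hab : a₁ ≠ b₁ := by
    rintro rfl
    exact hncol (by simp [Set.insert_comm]; exact collinear_pair ℝ _ _)
  have hune : u0 ≠ 0 ∨ u1 ≠ 0 := by
    by_contra h
    push_neg at h
    apply hab
    have h0' := h.1; have h1' := h.2
    rw [hu0d] at h0'; rw [hu1d] at h1'
    ext i
    fin_cases i <;> [skip; skip] <;> simp <;> linarith
  have hDne : u0*v1 - u1*v0 ≠ 0 := by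
    intro hΔ
    apply hncol
    -- a₂ - a₁ is parallel to b₁ - a₁
    have hkey : e1 * u0 = e0 * u1 := by
      linear_combination u1*h0 + (-u0)*h1 + (-s)*hΔ
    -- build collinearity
    apply (collinear_iff_of_mem (Set.mem_insert a₁ _)).2
    refine ⟨b₁ - a₁, ?_⟩
    intro P hP
    rcases hP with rfl | hP
    · exact ⟨0, by simp⟩
    rcases hP with rfl | hP
    · exact ⟨1, by simp⟩
    rcases hP with rfl | hP
    · -- P = a₂
      rcases hune with hu | hu
      · refine ⟨e0/u0, ?_⟩
        ext i
        fin_cases i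
        · show a₂ 0 = e0/u0 * (b₁ 0 - a₁ 0) + a₁ 0
          rw [← hu0d, div_mul_cancel₀ _ hu, he0d]; ring
        · show a₂ 1 = e0/u0 * (b₁ 1 - a₁ 1) + a₁ 1
          rw [← hu1d]
          have hk2 : (a₂ 1 - a₁ 1) * u0 = e0 * u1 := by rw [← he1d]; exact hkey
          field_simp
          linear_combination hk2
      · refine ⟨e1/u1, ?_⟩
        ext i
        fin_cases i
        · show a₂ 0 = e1/u1 * (b₁ 0 - a₁ 0) + a₁ 0
          rw [← hu0d]
          have hk2 : (a₂ 0 - a₁ 0) * u1 = e1 * u0 := by rw [← he0d]; exact hkey.symm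
          field_simp
          linear_combination hk2
        · show a₂ 1 = e1/u1 * (b₁ 1 - a₁ 1) + a₁ 1
          rw [← hu1d, div_mul_cancel₀ _ hu, he1d]; ring
  -- norm squares
  have hr₁sq : ‖a₁ - b₁‖^2 = u0^2 + u1^2 := by
    rw [norm_sq_two]
    show (a₁ 0 - b₁ 0)^2 + (a₁ 1 - b₁ 1)^2 = _
    rw [hu0d, hu1d]; ring
  have hr₂sq : ‖a₂ - b₂‖^2 = v0^2 + v1^2 := by
    rw [norm_sq_two]
    show (a₂ 0 - b₂ 0)^2 + (a₂ 1 - b₂ 1)^2 = _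
    rw [hv0d, hv1d]; ring
  have hL0 : a₁ 0 - b₂ 0 = -(t*u0 + (1-s)*v0) := by
    linear_combination h0 + he0d + hv0d
  have hL1 : a₁ 1 - b₂ 1 = -(t*u1 + (1-s)*v1) := by
    linear_combination h1 + he1d + hv1d
  have hM0 : a₂ 0 - b₁ 0 = -(s*v0 + (1-t)*u0) := by
    linear_combination -h0 - he0d + hu0d
  have hM1 : a₂ 1 - b₁ 1 = -(s*v1 + (1-t)*u1) := by
    linear_combination -h1 - he1d + hu1d
  have hγ₁sq : ‖a₁ - b₂‖^2 = (t*u0 + (1-s)*v0)^2 + (t*u1 + (1-s)*v1)^2 := by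
    rw [norm_sq_two]
    show (a₁ 0 - b₂ 0)^2 + (a₁ 1 - b₂ 1)^2 = _
    rw [hL0, hL1]; ring
  have hγ₂sq : ‖a₂ - b₁‖^2 = (s*v0 + (1-t)*u0)^2 + (s*v1 + (1-t)*u1)^2 := by
    rw [norm_sq_two]
    show (a₂ 0 - b₁ 0)^2 + (a₂ 1 - b₁ 1)^2 = _
    rw [hM0, hM1]; ring
  -- integer data
  obtain ⟨zu0, hzu0⟩ := grid_int N b₁ a₁ hgb₁ hga₁ 0
  obtain ⟨zu1, hzu1⟩ := grid_int N b₁ a₁ hgb₁ hga₁ 1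
  obtain ⟨zv0, hzv0⟩ := grid_int N b₂ a₂ hgb₂ hga₂ 0
  obtain ⟨zv1, hzv1⟩ := grid_int N b₂ a₂ hgb₂ hga₂ 1
  obtain ⟨ze0, hze0⟩ := grid_int N a₂ a₁ hga₂ hga₁ 0
  obtain ⟨ze1, hze1⟩ := grid_int N a₂ a₁ hga₂ hga₁ 1
  rw [← hu0d] at hzu0
  rw [← hu1d] at hzu1
  rw [← hv0d] at hzv0
  rw [← hv1d] at hzv1
  rw [← he0d] at hze0
  rw [← he1d] at hze1
  have hK₁ : e0*v1 - e1*v0 = t*(u0*v1 - u1*v0) := by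
    linear_combination (-v1)*h0 + v0*h1
  have hK₂ : e0*u1 - e1*u0 = s*(u0*v1 - u1*v0) := by
    linear_combination (-u1)*h0 + u0*h1
  have hDcast : ((|zu0*zv1 - zu1*zv0| : ℤ):ℝ) = |u0*v1 - u1*v0| := by
    rw [Int.cast_abs]
    congr 1
    push_cast
    rw [hzu0, hzu1, hzv0, hzv1]
  have hP₁cast : ((|ze0*zv1 - ze1*zv0| : ℤ):ℝ) = t * |u0*v1 - u1*v0| := by
    rw [Int.cast_abs]
    have : ((ze0*zv1 - ze1*zv0 : ℤ):ℝ) = e0*v1 - e1*v0 := by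
      push_cast
      rw [hze0, hze1, hzv0, hzv1]
    rw [this, hK₁, abs_mul, abs_of_pos ht0]
  have hP₂cast : ((|ze0*zu1 - ze1*zu0| : ℤ):ℝ) = s * |u0*v1 - u1*v0| := by
    rw [Int.cast_abs]
    have : ((ze0*zu1 - ze1*zu0 : ℤ):ℝ) = e0*u1 - e1*u0 := by
      push_cast
      rw [hze0, hze1, hzu0, hzu1]
    rw [this, hK₂, abs_mul, abs_of_pos hs0]
  -- bounds
  have hNR : (1:ℝ) ≤ (N:ℝ) := by exact_mod_cast hN
  have habs_u0 : |u0| ≤ (N:ℝ) := by rw [hu0d]; exact coord_abs_le N b₁ a₁ hgb₁ hga₁ 0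
  have habs_u1 : |u1| ≤ (N:ℝ) := by rw [hu1d]; exact coord_abs_le N b₁ a₁ hgb₁ hga₁ 1
  have habs_v0 : |v0| ≤ (N:ℝ) := by rw [hv0d]; exact coord_abs_le N b₂ a₂ hgb₂ hga₂ 0
  have habs_v1 : |v1| ≤ (N:ℝ) := by rw [hv1d]; exact coord_abs_le N b₂ a₂ hgb₂ hga₂ 1
  exact gap_core (N:ℝ) hNR u0 u1 v0 v1 t s ‖a₁ - b₁‖ ‖a₂ - b₂‖ ‖a₁ - b₂‖ ‖a₂ - b₁‖
    habs_u0 habs_u1 habs_v0 habs_v1 ht0 ht1 hs0 hs1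
    (norm_nonneg _) (norm_nonneg _) (norm_nonneg _) (norm_nonneg _)
    hr₁sq hr₂sq hγ₁sq hγ₂sq
    (|zu0*zv1 - zu1*zv0|) (|ze0*zv1 - ze1*zv0|) (|ze0*zu1 - ze1*zu0|)
    hDcast hDne hP₁cast hP₂cast

/-- For disjoint `n`-point sets `A, B` on the grid `{0,…,N}²` with no three points of
`A ∪ B` collinear, and `2^ℓ ≥ 8nN⁴`: if `M₁` and `M₂` both minimize the `d_ℓ`-weight over
all perfect matchings, then no edge of `M₁` crosses an edge of `M₂`; hence the union of all
`d_ℓ`-minimum weight perfect matchings forms a planar graph. -/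
theorem stmt_12 (N n l : ℕ) (hN : 0 < N) (hn : 0 < n)
    (hl : 8 * n * N ^ 4 ≤ 2 ^ l)
    (A B : Finset (EuclideanSpace ℝ (Fin 2)))
    (hAB : Disjoint A B) (hcardA : A.card = n) (hcardB : B.card = n)
    (hgrid : ∀ p ∈ A ∪ B, OnGrid N p)
    (hcol : ∀ P ∈ A ∪ B, ∀ Q ∈ A ∪ B, ∀ R ∈ A ∪ B, P ≠ Q → P ≠ R → Q ≠ R →
      ¬ Collinear ℝ ({P, Q, R} : Set (EuclideanSpace ℝ (Fin 2))))
    (M₁ M₂ : {x // x ∈ A} → {y // y ∈ B})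
    (hM₁ : Function.Bijective M₁) (hM₂ : Function.Bijective M₂)
    (hmin₁ : ∀ M : {x // x ∈ A} → {y // y ∈ B}, Function.Bijective M →
      dlWeight l A B M₁ ≤ dlWeight l A B M)
    (hmin₂ : ∀ M : {x // x ∈ A} → {y // y ∈ B}, Function.Bijective M →
      dlWeight l A B M₂ ≤ dlWeight l A B M) :
    ∀ a₁ a₂ : {x // x ∈ A}, a₁ ≠ a₂ → M₁ a₁ ≠ M₂ a₂ →
      Disjoint
        (openSegment ℝ (a₁ : EuclideanSpace ℝ (Fin 2)) (M₁ a₁ : EuclideanSpace ℝ (Fin 2)))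
        (openSegment ℝ (a₂ : EuclideanSpace ℝ (Fin 2)) (M₂ a₂ : EuclideanSpace ℝ (Fin 2))) := by
  classical
  intro a₁ a₂ hne hMne
  by_contra hnd
  rw [Set.not_disjoint_iff] at hnd
  obtain ⟨X, hX1, hX2⟩ := hnd
  set A₁ : EuclideanSpace ℝ (Fin 2) := (a₁ : EuclideanSpace ℝ (Fin 2)) with hA₁d
  set A₂ : EuclideanSpace ℝ (Fin 2) := (a₂ : EuclideanSpace ℝ (Fin 2)) with hA₂d
  set B₁ : EuclideanSpace ℝ (Fin 2) := (M₁ a₁ : EuclideanSpace ℝ (Fin 2)) with hB₁d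
  set B₂ : EuclideanSpace ℝ (Fin 2) := (M₂ a₂ : EuclideanSpace ℝ (Fin 2)) with hB₂d
  have ha₁A : A₁ ∈ A := a₁.2
  have ha₂A : A₂ ∈ A := a₂.2
  have hb₁B : B₁ ∈ B := (M₁ a₁).2
  have hb₂B : B₂ ∈ B := (M₂ a₂).2
  have hA₁A₂ : A₁ ≠ A₂ := fun h => hne (Subtype.ext h)
  have hA₁B₁ : A₁ ≠ B₁ := fun h =>
    (Finset.disjoint_left.1 hAB ha₁A) (h ▸ hb₁B)
  have hB₁A₂ : B₁ ≠ A₂ := fun h =>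
    (Finset.disjoint_left.1 hAB ha₂A) (h ▸ hb₁B)
  have hncol : ¬ Collinear ℝ ({A₁, B₁, A₂} : Set (EuclideanSpace ℝ (Fin 2))) :=
    hcol A₁ (Finset.mem_union_left _ ha₁A) B₁ (Finset.mem_union_right _ hb₁B)
      A₂ (Finset.mem_union_left _ ha₂A) hA₁B₁ hA₁A₂ hB₁A₂
  have hgap := gap_euclid N hN A₁ B₁ A₂ B₂
    (hgrid A₁ (Finset.mem_union_left _ ha₁A)) (hgrid B₁ (Finset.mem_union_right _ hb₁B))
    (hgrid A₂ (Finset.mem_union_left _ ha₂A)) (hgrid B₂ (Finset.mem_union_right _ hb₂B))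
    hncol X hX1 hX2
  -- n ≥ 2
  have hn2 : 2 ≤ n := by
    have h1 : 1 < A.card := Finset.one_lt_card.2 ⟨A₁, ha₁A, A₂, ha₂A, hA₁A₂⟩
    omega
  -- 2^l bound : (16 : ℕ) * N^3 ≤ 2^l
  have hpow : 16 * N^3 ≤ 2^l := by
    have h1 : N^3 ≤ N^4 := Nat.pow_le_pow_right hN (by omega)
    have h2 : 16 * N^4 ≤ 8 * n * N^4 := by
      have : 16 ≤ 8 * n := by omega
      exact Nat.mul_le_mul_right _ this
    omega
  have hpowR : (16:ℝ) * (N:ℝ)^3 ≤ (2:ℝ)^l := by exact_mod_cast hpow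
  have hNR : (1:ℝ) ≤ (N:ℝ) := by exact_mod_cast hN
  have h2l : (0:ℝ) < (2:ℝ)^l := by positivity
  -- strict dl inequality
  have hdl : dl l A₁ B₂ + dl l A₂ B₁ < dl l A₁ B₁ + dl l A₂ B₂ := by
    have hf1 : (dl l A₁ B₂ : ℝ) ≤ (2:ℝ)^l * ‖A₁ - B₂‖ := Int.floor_le _
    have hf2 : (dl l A₂ B₁ : ℝ) ≤ (2:ℝ)^l * ‖A₂ - B₁‖ := Int.floor_le _
    have hg1 : (2:ℝ)^l * ‖A₁ - B₁‖ < (dl l A₁ B₁ : ℝ) + 1 := Int.lt_floor_add_one _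
    have hg2 : (2:ℝ)^l * ‖A₂ - B₂‖ < (dl l A₂ B₂ : ℝ) + 1 := Int.lt_floor_add_one _
    have hN3pos : (0:ℝ) < 8*(N:ℝ)^3 := by positivity
    have hkey : (2:ℝ) ≤ (2:ℝ)^l * (1/(8*(N:ℝ)^3)) := by
      rw [mul_one_div, le_div_iff₀ hN3pos]
      linarith [hpowR]
    have hmul := mul_le_mul_of_nonneg_left hgap (le_of_lt h2l)
    have hreal : (dl l A₁ B₂ : ℝ) + (dl l A₂ B₁ : ℝ) < (dl l A₁ B₁ : ℝ) + (dl l A₂ B₂ : ℝ) := by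
      nlinarith [hf1, hf2, hg1, hg2, hmul, hkey]
    exact_mod_cast hreal
  -- combinatorial rewiring
  obtain ⟨G₁, G₂, hGb₁, hGb₂, hsum⟩ :=
    exists_rewire (fun (a : {x // x ∈ A}) (b : {y // y ∈ B}) =>
      dl l (a : EuclideanSpace ℝ (Fin 2)) (b : EuclideanSpace ℝ (Fin 2)))
      M₁ M₂ hM₁ hM₂ a₁ a₂ hne
  have hw₁ := hmin₁ G₁ hGb₁
  have hw₂ := hmin₂ G₂ hGb₂
  rw [dlWeight, dlWeight] at hw₁ hw₂
  rw [← hA₁d, ← hA₂d, ← hB₁d, ← hB₂d] at hsum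
  omega
end

section
/- Let N, n be positive integers and let A and B be disjoint sets of n points each in {0,…,N}² ⊆ ℝ². Let ℓ be a nonnegative integer, and for a = (a₁, a₂) ∈ A and b = (b₁, b₂) ∈ B define d_ℓ(a, b) = ⌊2^ℓ · ‖a − b‖⌋ and W_ℓ(a, b) = (2nN² + 1)·d_ℓ(a, b) + (b₂ − a₂)(b₁ + a₁). If M₁ and M₂ are bijections A → B with Σ_{a∈A} d_ℓ(a, M₁(a)) > Σ_{a∈A} d_ℓ(a, M₂(a)), then Σ_{a∈A} W_ℓ(a, M₁(a)) > Σ_{a∈A} W_ℓ(a, M₂(a)). In particular, every bijection minimizing Σ W_ℓ also minimizes Σ d_ℓ. -/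
open scoped BigOperators

attribute [local instance] Classical.propDecidable

/-- The combined weight function
`W_ℓ(a, b) = (2nN² + 1)·d_ℓ(a, b) + (b₂ - a₂)(b₁ + a₁)`. -/
noncomputable def Wl (n N l : ℕ) (a b : EuclideanSpace ℝ (Fin 2)) : ℝ :=
  (2 * n * N ^ 2 + 1 : ℝ) * (dl l a b : ℤ) + (b 1 - a 1) * (b 0 + a 0)

/-- The `W_ℓ`-weight of a perfect matching (bijection) `M` between `A` and `B`. -/
noncomputable def WlWeight (n N l : ℕ) (A B : Finset (EuclideanSpace ℝ (Fin 2)))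
    (M : {x // x ∈ A} → {y // y ∈ B}) : ℝ :=
  ∑ a : {x // x ∈ A},
    Wl n N l (a : EuclideanSpace ℝ (Fin 2)) (M a : EuclideanSpace ℝ (Fin 2))

/-- For disjoint `n`-point sets `A, B` on the grid `{0,…,N}²`: if two perfect matchings
satisfy `Σ d_ℓ(M₁) > Σ d_ℓ(M₂)`, then `Σ W_ℓ(M₁) > Σ W_ℓ(M₂)`; in particular every
perfect matching minimizing `Σ W_ℓ` also minimizes `Σ d_ℓ`. -/
theorem stmt_14 (N n l : ℕ) (hN : 0 < N) (hn : 0 < n)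
    (A B : Finset (EuclideanSpace ℝ (Fin 2)))
    (hAB : Disjoint A B) (hcardA : A.card = n) (hcardB : B.card = n)
    (hgrid : ∀ p ∈ A ∪ B, OnGrid N p) :
    (∀ M₁ M₂ : {x // x ∈ A} → {y // y ∈ B},
      Function.Bijective M₁ → Function.Bijective M₂ →
      dlWeight l A B M₂ < dlWeight l A B M₁ →
      WlWeight n N l A B M₂ < WlWeight n N l A B M₁) ∧
    (∀ M : {x // x ∈ A} → {y // y ∈ B}, Function.Bijective M →
      (∀ M' : {x // x ∈ A} → {y // y ∈ B}, Function.Bijective M' →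
        WlWeight n N l A B M ≤ WlWeight n N l A B M') →
      (∀ M' : {x // x ∈ A} → {y // y ∈ B}, Function.Bijective M' →
        dlWeight l A B M ≤ dlWeight l A B M')) := by

  classical
  set K : ℝ := 2 * n * N ^ 2 + 1 with hK
  have hbound : ∀ p ∈ A ∪ B, ∀ i : Fin 2, 0 ≤ p i ∧ p i ≤ N := by
    intro p hp i
    obtain ⟨m, hm, he⟩ := hgrid p hp i
    rw [he]
    exact ⟨by positivity, Nat.cast_le.mpr hm⟩
  set S : ({x // x ∈ A} → {y // y ∈ B}) → ℝ := fun M =>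
    ∑ a : {x // x ∈ A},
      ((M a : EuclideanSpace ℝ (Fin 2)) 1 * (a : EuclideanSpace ℝ (Fin 2)) 0 - (a : EuclideanSpace ℝ (Fin 2)) 1 * (M a : EuclideanSpace ℝ (Fin 2)) 0) with hSdef
  have hdecomp : ∀ M : {x // x ∈ A} → {y // y ∈ B}, Function.Bijective M →
      WlWeight n N l A B M = K * (dlWeight l A B M : ℝ)
        + ((∑ b : {y // y ∈ B}, (b : EuclideanSpace ℝ (Fin 2)) 1 * (b : EuclideanSpace ℝ (Fin 2)) 0)
            - ∑ a : {x // x ∈ A}, (a : EuclideanSpace ℝ (Fin 2)) 1 * (a : EuclideanSpace ℝ (Fin 2)) 0)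
        + S M := by
    intro M hM
    have hb : ∑ a : {x // x ∈ A}, (M a : EuclideanSpace ℝ (Fin 2)) 1 * (M a : EuclideanSpace ℝ (Fin 2)) 0
        = ∑ b : {y // y ∈ B}, (b : EuclideanSpace ℝ (Fin 2)) 1 * (b : EuclideanSpace ℝ (Fin 2)) 0 :=
      Fintype.sum_bijective M hM _ _ (fun a => rfl)
    simp only [WlWeight, Wl, dlWeight, Int.cast_sum, hSdef, ← hb, Finset.mul_sum]
    rw [← Finset.sum_sub_distrib, ← Finset.sum_add_distrib, ← Finset.sum_add_distrib]
    apply Finset.sum_congr rfl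
    intro a _
    ring
  have hSbound : ∀ M : {x // x ∈ A} → {y // y ∈ B}, |S M| ≤ (n : ℝ) * N ^ 2 := by
    intro M
    calc |S M| ≤ ∑ a : {x // x ∈ A},
          |(M a : EuclideanSpace ℝ (Fin 2)) 1 * (a : EuclideanSpace ℝ (Fin 2)) 0 - (a : EuclideanSpace ℝ (Fin 2)) 1 * (M a : EuclideanSpace ℝ (Fin 2)) 0| :=
        Finset.abs_sum_le_sum_abs _ _
      _ ≤ ∑ _a : {x // x ∈ A}, ((N : ℝ) ^ 2) := by
        apply Finset.sum_le_sum
        intro a _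
        have ha0 := hbound a (Finset.mem_union_left _ a.2) 0
        have ha1 := hbound a (Finset.mem_union_left _ a.2) 1
        have hb0 := hbound (M a) (Finset.mem_union_right _ (M a).2) 0
        have hb1 := hbound (M a) (Finset.mem_union_right _ (M a).2) 1
        rw [abs_le]
        constructor <;> nlinarith [ha0.1, ha0.2, ha1.1, ha1.2, hb0.1, hb0.2, hb1.1, hb1.2]
      _ = (n : ℝ) * N ^ 2 := by
        rw [Finset.sum_const, Finset.card_univ, Fintype.card_coe, hcardA]
        simp [nsmul_eq_mul]
  have main : ∀ M₁ M₂ : {x // x ∈ A} → {y // y ∈ B},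
      Function.Bijective M₁ → Function.Bijective M₂ →
      dlWeight l A B M₂ < dlWeight l A B M₁ →
      WlWeight n N l A B M₂ < WlWeight n N l A B M₁ := by
    intro M₁ M₂ h₁ h₂ hd
    rw [hdecomp M₁ h₁, hdecomp M₂ h₂]
    have hd1 : (dlWeight l A B M₂ : ℝ) + 1 ≤ (dlWeight l A B M₁ : ℝ) := by
      exact_mod_cast hd
    have hKpos : (0 : ℝ) ≤ K := by rw [hK]; positivity
    have hmul : K * ((dlWeight l A B M₂ : ℝ) + 1) ≤ K * (dlWeight l A B M₁ : ℝ) :=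
      mul_le_mul_of_nonneg_left hd1 hKpos
    have b1 := abs_le.mp (hSbound M₁)
    have b2 := abs_le.mp (hSbound M₂)
    have hKval : K = 2 * (n : ℝ) * N ^ 2 + 1 := hK
    nlinarith [b1.1, b2.2, hmul]
  refine ⟨main, ?_⟩
  intro M hM hmin M' hM'
  by_contra h
  push_neg at h
  have := main M M' hM hM' h
  have := hmin M' hM'
  linarith
end
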